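/- Let D be a set, n ∈ ℕ, and suppose f_0, g_0, …, f_n, g_n ∈ B(D) and x_0, …, x_n ∈ D satisfy f_k(x_j) = g_k(x_j) for all j < k and |f_k(x_k) − g_k(x_k)| ≥ c for all k, for some c > 0. For ξ ∈ {0,1}^{n+1} define h_ξ = (1/(n+1)) Σ_{i=0}^n (ξ_i f_i + (1−ξ_i) g_i). Then for any distinct ξ, ξ' ∈ {0,1}^{n+1}, ‖h_ξ − h_{ξ'}‖_∞ ≥ c/(n+1). -/

import Mathlib

open scoped Pointwise

noncomputable section

/-- `B(D)`: the space of bounded complex-valued functions on `D` with sup-norm,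
modeled as `ℓ^∞(D, ℂ)`. -/
abbrev BD (D : Type*) : Type _ := ↥(lp (fun _ : D => ℂ) ⊤)

/-- The `n`-th sampling number of `F` in `B(D)`. -/
def samplingNum {D : Type*} (F : Set (BD D)) (n : ℕ) : ℝ :=
  ⨅ (x : Fin n → D) (φ : (Fin n → ℂ) → BD D),
    ⨆ f ∈ F, ‖f - φ (fun k => (f : ∀ _ : D, ℂ) (x k))‖

/-- The `n`-th entropy number of `F` in a seminormed space `Y` (using `2^n` centers). -/
def entropyNum {Y : Type*} [SeminormedAddCommGroup Y] (F : Set Y) (n : ℕ) : ℝ :=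
  ⨅ (y : Fin (2 ^ n) → Y), ⨆ f ∈ F, ⨅ i, ‖f - y i‖

/-- The `n`-th inner entropy number of `F` (using `2^n + 1` points of `F`). -/
def innerEntropyNum {Y : Type*} [SeminormedAddCommGroup Y] (F : Set Y) (n : ℕ) : ℝ :=
  ⨆ (y : Fin (2 ^ n + 1) → Y) (_ : ∀ i, y i ∈ F),
    ⨅ p : {p : Fin (2 ^ n + 1) × Fin (2 ^ n + 1) // p.1 ≠ p.2}, ‖y p.1.1 - y p.1.2‖ / 2

/-- The (global) diameter of information of `F` in `B(D)`. -/
def diamInfo {D : Type*} (F : Set (BD D)) (n : ℕ) : ℝ :=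
  ⨅ (x : Fin n → D), ⨆ f ∈ F, ⨆ g ∈ F,
    ⨆ (_ : ∀ k, (f : ∀ _ : D, ℂ) (x k) = (g : ∀ _ : D, ℂ) (x k)), ‖f - g‖

theorem convex_comb_separated {D : Type*} (n : ℕ) (f g : Fin (n + 1) → BD D)
    (x : Fin (n + 1) → D) (c : ℝ) (hc : 0 < c)
    (hagree : ∀ k j : Fin (n + 1), j < k →
      (f k : ∀ _ : D, ℂ) (x j) = (g k : ∀ _ : D, ℂ) (x j))
    (hsep : ∀ k, c ≤ ‖(f k : ∀ _ : D, ℂ) (x k) - (g k : ∀ _ : D, ℂ) (x k)‖)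
    (ξ ξ' : Fin (n + 1) → Bool) (hne : ξ ≠ ξ') :
    c / ((n : ℝ) + 1) ≤
      ‖(((n : ℝ) + 1)⁻¹ • ∑ i, if ξ i then f i else g i) -
        (((n : ℝ) + 1)⁻¹ • ∑ i, if ξ' i then f i else g i)‖ := by
  classical
  set S : Finset (Fin (n+1)) := Finset.univ.filter (fun i => ξ i ≠ ξ' i) with hS
  have hSne : S.Nonempty := by
    rcases Function.ne_iff.1 hne with ⟨i, hi⟩
    exact ⟨i, by simp [hS, hi]⟩
  set k := S.min' hSne with hk
  have hkne : ξ k ≠ ξ' k := by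
    have := S.min'_mem hSne
    simpa [hS] using this
  have hmin : ∀ i, ξ i ≠ ξ' i → k ≤ i := fun i hi => S.min'_le i (by simp [hS, hi])
  set u : BD D := (((n : ℝ) + 1)⁻¹ • ∑ i, if ξ i then f i else g i) -
      (((n : ℝ) + 1)⁻¹ • ∑ i, if ξ' i then f i else g i) with hu
  have hval : (u : ∀ _ : D, ℂ) (x k) = (((n : ℝ) + 1)⁻¹ : ℝ) •
      (∑ i, (((if ξ i then f i else g i : BD D) : ∀ _ : D, ℂ) (x k) -
        ((if ξ' i then f i else g i : BD D) : ∀ _ : D, ℂ) (x k))) := by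
    rw [hu, lp.coeFn_sub, Pi.sub_apply, lp.coeFn_smul, lp.coeFn_smul, Pi.smul_apply, Pi.smul_apply,
      lp.coeFn_sum, lp.coeFn_sum, Finset.sum_apply, Finset.sum_apply]
    simp [hu, lp.coeFn_sub, lp.coeFn_smul, lp.coeFn_sum, Finset.sum_apply, smul_sub,
      Finset.sum_sub_distrib]
  have hsingle : (∑ i, (((if ξ i then f i else g i : BD D) : ∀ _ : D, ℂ) (x k) -
        ((if ξ' i then f i else g i : BD D) : ∀ _ : D, ℂ) (x k))) =
      (((if ξ k then f k else g k : BD D) : ∀ _ : D, ℂ) (x k) -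
        ((if ξ' k then f k else g k : BD D) : ∀ _ : D, ℂ) (x k)) := by
    apply Finset.sum_eq_single_of_mem k (Finset.mem_univ k)
    intro i _ hik
    by_cases hii : ξ i = ξ' i
    · simp [hii]
    · have hki : k < i := lt_of_le_of_ne (hmin i hii) (Ne.symm hik)
      have := hagree i k hki
      cases ξ i <;> cases ξ' i <;> simp [this]
  have habs : ‖(u : ∀ _ : D, ℂ) (x k)‖ = ((n : ℝ) + 1)⁻¹ *
      ‖(f k : ∀ _ : D, ℂ) (x k) - (g k : ∀ _ : D, ℂ) (x k)‖ := by
    rw [hval, hsingle]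
    have hpos : (0:ℝ) ≤ ((n : ℝ) + 1)⁻¹ := by positivity
    cases hξk : ξ k
    · have hξ'k : ξ' k = true := by
        cases h' : ξ' k
        · exact absurd (hξk.trans h'.symm) hkne
        · rfl
      simp only [hξk, hξ'k, if_neg Bool.false_ne_true, if_pos rfl, Bool.false_eq_true, if_false,
        if_true]
      rw [norm_smul, Real.norm_eq_abs, abs_of_nonneg hpos,
        norm_sub_rev]
    · have hξ'k : ξ' k = false := by
        cases h' : ξ' k
        · rfl
        · exact absurd (hξk.trans h'.symm) hkne
      simp only [hξk, hξ'k, Bool.false_eq_true, if_false, if_true]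
      rw [norm_smul, Real.norm_eq_abs, abs_of_nonneg hpos]
  have hle : ‖(u : ∀ _ : D, ℂ) (x k)‖ ≤ ‖u‖ :=
    lp.norm_apply_le_norm ENNReal.top_ne_zero u (x k)
  have hnpos : (0:ℝ) < (n : ℝ) + 1 := by positivity
  calc c / ((n : ℝ) + 1) = ((n : ℝ) + 1)⁻¹ * c := by rw [div_eq_inv_mul]
    _ ≤ ((n : ℝ) + 1)⁻¹ * ‖(f k : ∀ _ : D, ℂ) (x k) - (g k : ∀ _ : D, ℂ) (x k)‖ := by
        exact mul_le_mul_of_nonneg_left (hsep k) (by positivity)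
    _ = ‖(u : ∀ _ : D, ℂ) (x k)‖ := habs.symm
    _ ≤ ‖u‖ := hle
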